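/- Let T ≥ 2 be an integer, let 1 ≤ s ≤ r < e ≤ T be integers, and let f ∈ ℝ^T have exactly one change-point r on [s,e] with values μ₁, μ₂ and jump magnitude Δ. Let n ≥ 3/2, δ > 0, f̲ > 0 and C̲ > 0 be reals with Δ ≥ f̲, √δ·f̲ ≥ C̲·√(log T), and min{e−r, r−s+1} ≥ δ/(2n). Let X ∈ ℝ^T satisfy |X̃^b_{s,e} − f̃^b_{s,e}| ≤ √(8·log T) for every integer b with s ≤ b < e. Then max over integers b with s ≤ b < e of |X̃^b_{s,e}| ≥ (1/√(4n) − 2√2/C̲)·√δ·f̲. -/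

import Mathlib

open Real Finset

/-- CUSUM statistic of `x` at `b` over the interval `[s, e]`. -/
noncomputable def cusum (x : ℕ → ℝ) (s b e : ℕ) : ℝ :=
  Real.sqrt (((e : ℝ) - b) / (((e : ℝ) - s + 1) * ((b : ℝ) - s + 1))) *
      (∑ t ∈ Finset.Icc s b, x t) -
    Real.sqrt (((b : ℝ) - s + 1) / (((e : ℝ) - s + 1) * ((e : ℝ) - b))) *
      (∑ t ∈ Finset.Icc (b + 1) e, x t)

/-- lower bound on the maximal absolute CUSUM of the observed data over
`[s, e]`, when the interval contains a single change-point whose distance to both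
end-points is at least `δ/(2n)`. -/
theorem statement6 (T s r e : ℕ) (hT : 2 ≤ T) (hs : 1 ≤ s) (hsr : s ≤ r) (hre : r < e)
    (heT : e ≤ T) (f : ℕ → ℝ) (μ₁ μ₂ Δ : ℝ) (hμ : μ₁ ≠ μ₂)
    (hf₁ : ∀ t, s ≤ t → t ≤ r → f t = μ₁) (hf₂ : ∀ t, r + 1 ≤ t → t ≤ e → f t = μ₂)
    (hΔ : Δ = |μ₂ - μ₁|)
    (n δ flow Clow : ℝ) (hn : (3 : ℝ) / 2 ≤ n) (hδ : 0 < δ) (hflow : 0 < flow)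
    (hClow : 0 < Clow) (hΔflow : flow ≤ Δ)
    (hSNR : Clow * Real.sqrt (Real.log T) ≤ Real.sqrt δ * flow)
    (hmin : δ / (2 * n) ≤ min ((e : ℝ) - r) ((r : ℝ) - s + 1))
    (X : ℕ → ℝ)
    (hX : ∀ b, s ≤ b → b < e →
      |cusum X s b e - cusum f s b e| ≤ Real.sqrt (8 * Real.log T)) :
    ∃ b, s ≤ b ∧ b < e ∧
      (1 / Real.sqrt (4 * n) - 2 * Real.sqrt 2 / Clow) * Real.sqrt δ * flow ≤
        |cusum X s b e| := by
  refine ⟨r, hsr, hre, ?_⟩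
  set a : ℝ := (r : ℝ) - s + 1 with ha_def
  set b : ℝ := (e : ℝ) - r with hb_def
  set L : ℝ := (e : ℝ) - s + 1 with hL_def
  have hsr' : (s : ℝ) ≤ r := by exact_mod_cast hsr
  have hre' : (r : ℝ) < e := by exact_mod_cast hre
  have hn0 : (0 : ℝ) < n := by linarith
  have ha : 0 < a := by simp [ha_def]; linarith
  have hb : 0 < b := by simp [hb_def]; linarith
  have hL : L = a + b := by simp [hL_def, ha_def, hb_def]; ring
  have hLpos : 0 < L := by rw [hL]; linarith
  -- sums of f
  have hsum1 : (∑ t ∈ Finset.Icc s r, f t) = a * μ₁ := by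
    rw [Finset.sum_congr rfl (fun t ht => hf₁ t (Finset.mem_Icc.mp ht).1 (Finset.mem_Icc.mp ht).2)]
    rw [Finset.sum_const, Nat.card_Icc, nsmul_eq_mul]
    have : ((r + 1 - s : ℕ) : ℝ) = a := by
      have : s ≤ r + 1 := by omega
      push_cast [this]
      simp [ha_def]; ring
    rw [this]
  have hsum2 : (∑ t ∈ Finset.Icc (r + 1) e, f t) = b * μ₂ := by
    rw [Finset.sum_congr rfl (fun t ht => hf₂ t (Finset.mem_Icc.mp ht).1 (Finset.mem_Icc.mp ht).2)]
    rw [Finset.sum_const, Nat.card_Icc, nsmul_eq_mul]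
    have : ((e + 1 - (r + 1) : ℕ) : ℝ) = b := by
      have h : e + 1 - (r + 1) = e - r := by omega
      rw [h, Nat.cast_sub hre.le]
    rw [this]
  -- compute cusum f s r e
  have key1 : Real.sqrt (b / (L * a)) * a = Real.sqrt (a * b / L) := by
    rw [show a = Real.sqrt (a ^ 2) from (Real.sqrt_sq ha.le).symm]
    rw [← Real.sqrt_mul (by positivity)]
    congr 1
    field_simp
    ring
    rw [Real.sq_sqrt (by positivity)]
  have key2 : Real.sqrt (a / (L * b)) * b = Real.sqrt (a * b / L) := by
    rw [show b = Real.sqrt (b ^ 2) from (Real.sqrt_sq hb.le).symm]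
    rw [← Real.sqrt_mul (by positivity)]
    congr 1
    field_simp
    ring
    rw [Real.sq_sqrt (by positivity)]
  have hcf : cusum f s r e = Real.sqrt (a * b / L) * (μ₁ - μ₂) := by
    rw [cusum, hsum1, hsum2]
    rw [show Real.sqrt (((e : ℝ) - r) / (((e : ℝ) - s + 1) * ((r : ℝ) - s + 1))) * (a * μ₁)
        = (Real.sqrt (b / (L * a)) * a) * μ₁ by rw [hb_def, hL_def, ha_def]; ring,
      show Real.sqrt (((r : ℝ) - s + 1) / (((e : ℝ) - s + 1) * ((e : ℝ) - r))) * (b * μ₂)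
        = (Real.sqrt (a / (L * b)) * b) * μ₂ by rw [hb_def, hL_def, ha_def]; ring]
    rw [key1, key2]
    ring
  -- lower bound on |cusum f|
  have hprod : δ / (4 * n) ≤ a * b / L := by
    have hm1 : δ / (2 * n) ≤ b := le_trans hmin (min_le_left _ _)
    have hm2 : δ / (2 * n) ≤ a := le_trans hmin (min_le_right _ _)
    have hm1' : δ ≤ 2 * n * b := by rw [div_le_iff₀ (by linarith)] at hm1; linarith
    have hm2' : δ ≤ 2 * n * a := by rw [div_le_iff₀ (by linarith)] at hm2; linarith
    rw [div_le_div_iff₀ (by linarith) hLpos, hL]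
    nlinarith [mul_le_mul_of_nonneg_right hm1' ha.le, mul_le_mul_of_nonneg_right hm2' hb.le]
  have hΔpos : 0 < Δ := lt_of_lt_of_le hflow hΔflow
  have hcfbound : Real.sqrt δ / Real.sqrt (4 * n) * flow ≤ |cusum f s r e| := by
    rw [hcf, abs_mul, abs_of_nonneg (Real.sqrt_nonneg _)]
    have h1 : Real.sqrt (δ / (4 * n)) ≤ Real.sqrt (a * b / L) := Real.sqrt_le_sqrt hprod
    have h2 : |μ₁ - μ₂| = Δ := by rw [hΔ, abs_sub_comm]
    rw [h2, ← Real.sqrt_div' δ (by positivity)]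
    · exact mul_le_mul h1 hΔflow hflow.le (Real.sqrt_nonneg _)
  -- bound on noise
  have hlogT : 0 ≤ Real.log T := Real.log_nonneg (by exact_mod_cast Nat.one_le_of_lt hT)
  have hnoise : Real.sqrt (8 * Real.log T) ≤ 2 * Real.sqrt 2 / Clow * (Real.sqrt δ * flow) := by
    have : Real.sqrt (8 * Real.log T) = 2 * Real.sqrt 2 * Real.sqrt (Real.log T) := by
      rw [Real.sqrt_mul (by norm_num)]
      congr 1
      rw [show (8 : ℝ) = 2 ^ 2 * 2 by norm_num, Real.sqrt_mul (by positivity),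
        Real.sqrt_sq (by norm_num)]
    rw [this]
    have h3 : Real.sqrt (Real.log T) ≤ Real.sqrt δ * flow / Clow := by
      rw [le_div_iff₀ hClow]
      linarith [hSNR]
    calc 2 * Real.sqrt 2 * Real.sqrt (Real.log T)
        ≤ 2 * Real.sqrt 2 * (Real.sqrt δ * flow / Clow) := by
          apply mul_le_mul_of_nonneg_left h3 (by positivity)
      _ = 2 * Real.sqrt 2 / Clow * (Real.sqrt δ * flow) := by ring
  -- conclude
  have hXr := hX r hsr hre
  have htri : |cusum f s r e| - |cusum X s r e - cusum f s r e| ≤ |cusum X s r e| := by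
    have := abs_sub_abs_le_abs_sub (cusum f s r e) (cusum X s r e)
    rw [abs_sub_comm] at this
    linarith
  have hdiv : Real.sqrt δ / Real.sqrt (4 * n) * flow
      = 1 / Real.sqrt (4 * n) * Real.sqrt δ * flow := by ring
  calc (1 / Real.sqrt (4 * n) - 2 * Real.sqrt 2 / Clow) * Real.sqrt δ * flow
      = Real.sqrt δ / Real.sqrt (4 * n) * flow
        - 2 * Real.sqrt 2 / Clow * (Real.sqrt δ * flow) := by ring
    _ ≤ |cusum f s r e| - Real.sqrt (8 * Real.log T) := by
        have := hcfbound; linarith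
    _ ≤ |cusum f s r e| - |cusum X s r e - cusum f s r e| := by linarith
    _ ≤ |cusum X s r e| := htri
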